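/- For every finite set P of positive integers, there exist a finite abelian group B, a subgroup D of B, and an automorphism θ of B such that P = { card({θ^n(d) : n ∈ ℤ} ∩ D) : d ∈ D, d ≠ 0 }, i.e., the set of cardinalities of intersections of θ-orbits of nonzero elements of D with D equals P. -/

import Mathlib

/-- A witness for the generalized Algebraic Lemma (finite case): a finite
abelian group `B`, a subgroup `D` and an automorphism `θ` such that the set
of cardinalities of intersections of `θ`-orbits of nonzero elements of `D`
with `D` equals `P`. -/
structure AlgLemmaWitness (P : Finset ℕ) where
  B : Type
  [grp : AddCommGroup B]
  [fin : Fintype B]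
  D : AddSubgroup B
  θ : AddAut B
  spec : {n : ℕ | ∃ d ∈ D, d ≠ 0 ∧
      ((Set.range fun k : ℤ => (k • θ) d) ∩ (D : Set B)).ncard = n} = ↑P


open Polynomial

namespace AlgLemmaProof

noncomputable section Gadget

variable {K : Type} [Field K]

/-- The gadget polynomial `X^a - u`. -/
def gp (u : Kˣ) (a : ℕ) : K[X] := X ^ a - C (u : K)

variable {u : Kˣ} {a : ℕ}

theorem gp_monic (ha : a ≠ 0) : (gp u a).Monic := monic_X_pow_sub_C _ ha

/-- Power basis of the gadget ring. -/
def gB (ha : a ≠ 0) : PowerBasis K (AdjoinRoot (gp u a)) :=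
  AdjoinRoot.powerBasis' (gp_monic ha)

theorem gB_dim (ha : a ≠ 0) : (gB (u := u) ha).dim = a := by
  simp only [gB, AdjoinRoot.powerBasis'_dim, gp]
  exact natDegree_X_pow_sub_C

theorem gB_gen (ha : a ≠ 0) : (gB (u := u) ha).gen = AdjoinRoot.root (gp u a) := by
  simp [gB]

theorem root_pow_eq (ha : a ≠ 0) :
    (AdjoinRoot.root (gp u a)) ^ a = algebraMap K _ (u : K) := by
  have h : AdjoinRoot.mk (gp u a) (gp u a) = 0 := AdjoinRoot.mk_self
  rw [gp, map_sub, map_pow, AdjoinRoot.mk_X, AdjoinRoot.mk_C, sub_eq_zero] at h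
  simp only [gp]
  exact h

theorem gadget_nontrivial (ha : a ≠ 0) : Nontrivial (AdjoinRoot (gp u a)) := by
  have b := (gB (u := u) ha).basis
  have h0 : (0 : ℕ) < (gB (u := u) ha).dim := by rw [gB_dim ha]; omega
  exact nontrivial_of_ne _ _ (b.ne_zero ⟨0, h0⟩)

theorem gadget_finite (ha : a ≠ 0) [Finite K] : Finite (AdjoinRoot (gp u a)) := by
  have e := (gB (u := u) ha).basis.repr.toEquiv
  have e2 := Finsupp.equivFunOnFinite
    (α := Fin (gB (u := u) ha).dim) (M := K)
  exact Finite.of_equiv _ (e.trans e2).symm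

/-- The root as a unit. -/
def Xu (u : Kˣ) (ha : a ≠ 0) : (AdjoinRoot (gp u a))ˣ :=
  Units.mkOfMulEqOne (AdjoinRoot.root (gp u a))
    (algebraMap K _ ((u⁻¹ : Kˣ) : K) * (AdjoinRoot.root (gp u a)) ^ (a - 1))
    (by
      have : AdjoinRoot.root (gp u a) *
          (algebraMap K _ ((u⁻¹ : Kˣ) : K) * (AdjoinRoot.root (gp u a)) ^ (a - 1)) =
          algebraMap K _ ((u⁻¹ : Kˣ) : K) * (AdjoinRoot.root (gp u a)) ^ (1 + (a - 1)) := by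
        ring
      rw [this, Nat.add_sub_cancel' (Nat.one_le_iff_ne_zero.mpr ha), root_pow_eq ha,
        ← map_mul, Units.inv_mul, map_one])

theorem Xu_val (ha : a ≠ 0) : ((Xu u ha : (AdjoinRoot (gp u a))ˣ) : AdjoinRoot (gp u a)) =
    AdjoinRoot.root (gp u a) := rfl

/-- The scalar unit `u` inside the gadget ring. -/
def Uu (u : Kˣ) (a : ℕ) : (AdjoinRoot (gp u a))ˣ :=
  Units.map (algebraMap K (AdjoinRoot (gp u a))).toMonoidHom u

theorem Uu_val : ((Uu u a : (AdjoinRoot (gp u a))ˣ) : AdjoinRoot (gp u a)) =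
    algebraMap K _ (u : K) := rfl

theorem Xu_pow_a (ha : a ≠ 0) : (Xu u ha) ^ a = Uu u a := by
  ext
  rw [Units.val_pow_eq_pow_val, Xu_val, root_pow_eq ha, Uu_val]

theorem Uu_zpow (j : ℤ) : ((Uu u a ^ j : (AdjoinRoot (gp u a))ˣ) : AdjoinRoot (gp u a)) =
    algebraMap K _ ((u ^ j : Kˣ) : K) := by
  rw [Uu, ← map_zpow, Units.coe_map]
  rfl

/-- key scalar-multiple formula: `x^(a*j) * c = u^j * c`. -/
theorem Xu_pow_mul (ha : a ≠ 0) (j : ℤ) (c : K) :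
    ((Xu u ha ^ ((a : ℤ) * j) : (AdjoinRoot (gp u a))ˣ) : AdjoinRoot (gp u a)) *
      algebraMap K _ c = algebraMap K _ (((u ^ j : Kˣ) : K) * c) := by
  rw [zpow_mul, zpow_natCast, Xu_pow_a ha, Uu_zpow, ← map_mul]

/-- membership criterion -/
theorem gadget_mem (ha : a ≠ 0) {c : K} (hc : c ≠ 0) (k : ℤ) :
    ((Xu u ha ^ k : (AdjoinRoot (gp u a))ˣ) : AdjoinRoot (gp u a)) * algebraMap K _ c ∈
      Set.range (algebraMap K (AdjoinRoot (gp u a))) ↔ (a : ℤ) ∣ k := by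
  have ha' : (0 : ℤ) < (a : ℤ) := by exact_mod_cast Nat.pos_of_ne_zero ha
  set q : ℤ := k / (a : ℤ) with hq
  set s : ℕ := (k % (a : ℤ)).toNat with hs
  have hsnn : (0 : ℤ) ≤ k % (a : ℤ) := Int.emod_nonneg k (by exact_mod_cast ha)
  have hks : k = (a : ℤ) * q + (s : ℤ) := by
    rw [hs, Int.toNat_of_nonneg hsnn, hq]
    exact (Int.mul_ediv_add_emod k (a : ℤ)).symm
  have hslt : s < a := by
    have := Int.emod_lt_of_pos k ha'
    omega
  have hXk : ((Xu u ha ^ k : (AdjoinRoot (gp u a))ˣ) : AdjoinRoot (gp u a)) =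
      algebraMap K _ ((u ^ q : Kˣ) : K) * (AdjoinRoot.root (gp u a)) ^ s := by
    rw [hks, zpow_add, zpow_mul, zpow_natCast, Xu_pow_a ha, Units.val_mul, Uu_zpow,
      zpow_natCast, Units.val_pow_eq_pow_val, Xu_val]
  have hc' : ((u ^ q : Kˣ) : K) * c ≠ 0 := mul_ne_zero (Units.ne_zero _) hc
  have hre : ((Xu u ha ^ k : (AdjoinRoot (gp u a))ˣ) : AdjoinRoot (gp u a)) *
      algebraMap K _ c =
      algebraMap K _ (((u ^ q : Kˣ) : K) * c) * (AdjoinRoot.root (gp u a)) ^ s := by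
    rw [hXk, map_mul]; ring
  rw [hre]
  constructor
  · rintro ⟨c', hcm⟩
    -- use the power basis
    set pb := gB (u := u) ha with hpb
    have hdim : pb.dim = a := gB_dim ha
    have h0 : 0 < pb.dim := by omega
    have hslt' : s < pb.dim := by omega
    have hb1 : algebraMap K _ (((u ^ q : Kˣ) : K) * c) * (AdjoinRoot.root (gp u a)) ^ s =
        (((u ^ q : Kˣ) : K) * c) • pb.basis ⟨s, hslt'⟩ := by
      rw [pb.basis_eq_pow, gB_gen ha, Algebra.smul_def]
    have hb2 : algebraMap K (AdjoinRoot (gp u a)) c' = c' • pb.basis ⟨0, h0⟩ := by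
      rw [pb.basis_eq_pow, gB_gen ha, Algebra.smul_def, pow_zero, mul_one]
    rw [hb1, hb2] at hcm
    have := congrArg pb.basis.repr hcm
    rw [map_smul, map_smul, pb.basis.repr_self, pb.basis.repr_self,
      Finsupp.smul_single, Finsupp.smul_single, smul_eq_mul, smul_eq_mul,
      mul_one, mul_one] at this
    rcases (Finsupp.single_eq_single_iff _ _ _ _).mp this with ⟨hj, -⟩ | ⟨-, hc0⟩
    · have hs0 : s = 0 := by
        have := congrArg Fin.val hj
        simpa using this.symm
      rw [hks, hs0]
      simp [Dvd.intro]
    · exact absurd hc0 hc'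
  · intro hd
    have h1 : (a : ℤ) ∣ (s : ℤ) := by
      have : (s : ℤ) = k - (a : ℤ) * q := by omega
      rw [this]
      exact dvd_sub hd (Dvd.intro _ rfl)
    have h2 : a ∣ s := by exact_mod_cast h1
    have hs0 : s = 0 := Nat.eq_zero_of_dvd_of_lt h2 hslt
    rw [hs0, pow_zero, mul_one]
    exact ⟨_, rfl⟩

end Gadget

noncomputable section Main

variable {P : Finset ℕ}

/-- The index type: elements of `P`. -/
abbrev Idx (P : Finset ℕ) := {x : ℕ // x ∈ P}

/-- `Aa i` is the product of all elements of `P` smaller than `i`. -/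
def Aa (i : Idx P) : ℕ := ∏ j ∈ P.filter (· < i.1), j

theorem Aa_ne_zero (hP : ∀ n ∈ P, 0 < n) (i : Idx P) : Aa i ≠ 0 :=
  Finset.prod_ne_zero_iff.mpr fun j hj =>
    (hP j (Finset.mem_of_mem_filter j hj)).ne'

theorem Aa_dvd {i j : Idx P} (h : i ≤ j) : Aa i ∣ Aa j := by
  apply Finset.prod_dvd_prod_of_subset
  intro x hx
  rcases Finset.mem_filter.mp hx with ⟨hxP, hxlt⟩
  exact Finset.mem_filter.mpr ⟨hxP, lt_of_lt_of_le hxlt h⟩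

theorem Aa_mul_dvd {i j : Idx P} (h : i < j) : Aa i * i.1 ∣ Aa j := by
  have h1 : Aa i * i.1 = ∏ k ∈ insert i.1 (P.filter (· < i.1)), k := by
    rw [Finset.prod_insert (by simp), mul_comm]
    rfl
  rw [h1]
  apply Finset.prod_dvd_prod_of_subset
  intro x hx
  rcases Finset.mem_insert.mp hx with rfl | hx
  · exact Finset.mem_filter.mpr ⟨i.2, h⟩
  · rcases Finset.mem_filter.mp hx with ⟨hxP, hxlt⟩
    exact Finset.mem_filter.mpr ⟨hxP, lt_trans hxlt h⟩

variable (p : ℕ) [Fact p.Prime] (u : Idx P → (ZMod p)ˣ)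

/-- The gadget ring at index `i`. -/
abbrev Rg (i : Idx P) : Type := AdjoinRoot (gp (u i) (Aa i))

/-- The ambient group: product of the gadget rings. -/
abbrev Bg : Type := ∀ i : Idx P, Rg p u i

variable {p u}

/-- The distinguished unit. -/
def XXg (hP : ∀ n ∈ P, 0 < n) : (Bg p u)ˣ :=
  Units.mkOfMulEqOne
    (fun i => ((Xu (u i) (Aa_ne_zero hP i) : (Rg p u i)ˣ) : Rg p u i))
    (fun i => (((Xu (u i) (Aa_ne_zero hP i))⁻¹ : (Rg p u i)ˣ) : Rg p u i))
    (by
      funext i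
      show ((Xu (u i) (Aa_ne_zero hP i) : (Rg p u i)ˣ) : Rg p u i) *
          (((Xu (u i) (Aa_ne_zero hP i))⁻¹ : (Rg p u i)ˣ) : Rg p u i) = 1
      exact Units.mul_inv _)

theorem XXg_zpow_apply (hP : ∀ n ∈ P, 0 < n) (k : ℤ) (i : Idx P) :
    ((XXg hP ^ k : (Bg p u)ˣ) : Bg p u) i =
      ((Xu (u i) (Aa_ne_zero hP i) ^ k : (Rg p u i)ˣ) : Rg p u i) := by
  have h1 : Units.map (Pi.evalRingHom (Rg p u) i).toMonoidHom (XXg hP) =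
      Xu (u i) (Aa_ne_zero hP i) := Units.ext rfl
  have h2 : ((XXg hP ^ k : (Bg p u)ˣ) : Bg p u) i =
      ((Units.map (Pi.evalRingHom (Rg p u) i).toMonoidHom (XXg hP ^ k) :
        (Rg p u i)ˣ) : Rg p u i) := rfl
  rw [h2, map_zpow, h1]

variable (p u) in
/-- The subgroup `D`. -/
def Dg : AddSubgroup (Bg p u) :=
  AddSubgroup.pi Set.univ
    (fun i => ((algebraMap (ZMod p) (Rg p u i)).range).toAddSubgroup)

theorem mem_Dg {d : Bg p u} :
    d ∈ Dg p u ↔ ∀ i, d i ∈ Set.range (algebraMap (ZMod p) (Rg p u i)) := by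
  constructor
  · intro hd i
    exact hd i (Set.mem_univ i)
  · intro hd i _
    exact hd i

/-- The core computation. -/
theorem core (hP : ∀ n ∈ P, 0 < n) (hu : ∀ i, orderOf (u i) = i.1)
    {d : Bg p u} (hdD : d ∈ Dg p u) (μ : Idx P) (hdμ : d μ ≠ 0)
    (hmax : ∀ j, d j ≠ 0 → j ≤ μ) :
    ((Set.range fun k : ℤ => ((XXg hP ^ k : (Bg p u)ˣ) : Bg p u) * d) ∩
      (Dg p u : Set (Bg p u))).ncard = μ.1 := by
  classical
  haveI : ∀ i : Idx P, Nontrivial (Rg p u i) :=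
    fun i => gadget_nontrivial (Aa_ne_zero hP i)
  -- the coefficients
  have hc' : ∀ i, ∃ x : ZMod p, algebraMap (ZMod p) (Rg p u i) x = d i :=
    mem_Dg.mp hdD
  choose c hc using hc'
  have hcμ : c μ ≠ 0 := by
    intro h0
    apply hdμ
    rw [← hc μ, h0, map_zero]
  -- Claim A
  have claimA : ∀ k : ℤ, (((XXg hP ^ k : (Bg p u)ˣ) : Bg p u) * d ∈ Dg p u) ↔
      ((Aa μ : ℤ) ∣ k) := by
    intro k
    rw [mem_Dg]
    constructor
    · intro h
      have hμ := h μ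
      rw [Pi.mul_apply, XXg_zpow_apply hP, ← hc μ] at hμ
      exact (gadget_mem (Aa_ne_zero hP μ) hcμ k).mp hμ
    · intro hk i
      rw [Pi.mul_apply, XXg_zpow_apply hP]
      by_cases hdi : d i = 0
      · rw [hdi, mul_zero]
        exact ⟨0, map_zero _⟩
      · have hci : c i ≠ 0 := by
          intro h0; apply hdi; rw [← hc i, h0, map_zero]
        rw [← hc i]
        refine (gadget_mem (Aa_ne_zero hP i) hci k).mpr ?_
        exact dvd_trans (Int.natCast_dvd_natCast.mpr (Aa_dvd (hmax i hdi))) hk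
  -- Claim B
  have claimB : ∀ j : ℤ, ((XXg hP ^ ((Aa μ : ℤ) * j) : (Bg p u)ˣ) : Bg p u) * d =
      Function.update d μ
        (algebraMap (ZMod p) (Rg p u μ) (((u μ ^ j : (ZMod p)ˣ) : ZMod p) * c μ)) := by
    intro j
    funext i
    rw [Pi.mul_apply, XXg_zpow_apply hP]
    by_cases hiμ : i = μ
    · subst hiμ
      rw [Function.update_self, ← hc i]
      exact Xu_pow_mul (Aa_ne_zero hP i) j (c i)
    · rw [Function.update_of_ne hiμ]
      by_cases hdi : d i = 0
      · rw [hdi, mul_zero]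
      · have hilt : i < μ := lt_of_le_of_ne (hmax i hdi) hiμ
        have h1 : Xu (u i) (Aa_ne_zero hP i) ^ (Aa i * i.1) = 1 := by
          rw [pow_mul, Xu_pow_a (Aa_ne_zero hP i), Uu]
          rw [← map_pow]
          have : (u i) ^ (i.1 : ℕ) = 1 := by
            rw [← hu i]; exact pow_orderOf_eq_one (u i)
          rw [this, map_one]
        have h2 : Xu (u i) (Aa_ne_zero hP i) ^ (Aa μ) = 1 :=
          orderOf_dvd_iff_pow_eq_one.mp
            ((orderOf_dvd_of_pow_eq_one h1).trans (Aa_mul_dvd hilt))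
        have h3 : Xu (u i) (Aa_ne_zero hP i) ^ ((Aa μ : ℤ) * j) = 1 := by
          rw [zpow_mul, zpow_natCast, h2, one_zpow]
        rw [h3, Units.val_one, one_mul]
  -- Claim C
  have claimC : (Set.range fun k : ℤ => ((XXg hP ^ k : (Bg p u)ˣ) : Bg p u) * d) ∩
      (Dg p u : Set (Bg p u)) =
      Set.range (fun j : ℤ => Function.update d μ
        (algebraMap (ZMod p) (Rg p u μ) (((u μ ^ j : (ZMod p)ˣ) : ZMod p) * c μ))) := by
    ext z
    constructor
    · rintro ⟨⟨k, rfl⟩, hzD⟩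
      rcases (claimA k).mp hzD with ⟨j, rfl⟩
      exact ⟨j, (claimB j).symm⟩
    · rintro ⟨j, rfl⟩
      have hmem : ((XXg hP ^ ((Aa μ : ℤ) * j) : (Bg p u)ˣ) : Bg p u) * d ∈ Dg p u :=
        (claimA _).mpr ⟨j, rfl⟩
      rw [claimB j] at hmem
      exact ⟨⟨(Aa μ : ℤ) * j, claimB j⟩, hmem⟩
  rw [claimC]
  -- compute the cardinality
  have hcomp : (fun j : ℤ => Function.update d μ
        (algebraMap (ZMod p) (Rg p u μ) (((u μ ^ j : (ZMod p)ˣ) : ZMod p) * c μ))) =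
      (fun w : (ZMod p)ˣ => Function.update d μ
        (algebraMap (ZMod p) (Rg p u μ) ((w : ZMod p) * c μ))) ∘
      (fun j : ℤ => u μ ^ j) := rfl
  rw [hcomp, Set.range_comp]
  have hFinj : Function.Injective (fun w : (ZMod p)ˣ => Function.update d μ
      (algebraMap (ZMod p) (Rg p u μ) ((w : ZMod p) * c μ))) := by
    intro w w' hww
    have := congrFun hww μ
    simp only [Function.update_self] at this
    have h2 := (algebraMap (ZMod p) (Rg p u μ)).injective this
    exact Units.ext (mul_right_cancel₀ hcμ h2)
  rw [Set.ncard_image_of_injective _ hFinj]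
  have hrz : (Set.range fun j : ℤ => u μ ^ j) =
      ((Subgroup.zpowers (u μ) : Subgroup (ZMod p)ˣ) : Set (ZMod p)ˣ) := by
    ext w
    simp [Subgroup.mem_zpowers_iff]
  rw [hrz, ← Nat.card_coe_set_eq, SetLike.coe_sort_coe, Nat.card_zpowers, hu μ]

end Main

theorem exists_algLemmaWitness' (P : Finset ℕ) (hP : ∀ n ∈ P, 0 < n) :
    Nonempty (AlgLemmaWitness P) := by
  classical
  -- find a suitable prime
  set M := ∏ n ∈ P, n with hM
  have hM0 : M ≠ 0 := Finset.prod_ne_zero_iff.mpr fun j hj => (hP j hj).ne'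
  obtain ⟨q, hq, hqgt, hqmod⟩ := Nat.exists_prime_gt_modEq_one (k := M) 1 hM0
  haveI : Fact q.Prime := ⟨hq⟩
  have hdvd : M ∣ q - 1 := (Nat.modEq_iff_dvd' hq.one_lt.le).mp hqmod.symm
  -- units of the right orders
  have hexu : ∀ i : Idx P, ∃ v : (ZMod q)ˣ, orderOf v = i.1 := by
    intro i
    obtain ⟨g, hg⟩ := IsCyclic.exists_ofOrder_eq_natCard (α := (ZMod q)ˣ)
    have hcard : Nat.card (ZMod q)ˣ = q - 1 := by
      rw [Nat.card_eq_fintype_card, ZMod.card_units]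
    have hgo : orderOf g = q - 1 := by rw [hg, hcard]
    have hdvd' : i.1 ∣ orderOf g := by
      rw [hgo]
      exact dvd_trans (Finset.dvd_prod_of_mem id i.2) hdvd
    have hgo0 : orderOf g ≠ 0 := by
      rw [hgo]; omega
    exact ⟨g ^ (orderOf g / i.1), orderOf_pow_orderOf_div hgo0 hdvd'⟩
  choose u hu using hexu
  -- the witness
  haveI : ∀ i : Idx P, Finite (Rg q u i) :=
    fun i => gadget_finite (Aa_ne_zero hP i)
  haveI : Finite (Bg q u) := Pi.finite
  haveI : ∀ i : Idx P, Nontrivial (Rg q u i) :=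
    fun i => gadget_nontrivial (Aa_ne_zero hP i)
  refine ⟨{ B := Bg q u
            grp := inferInstance
            fin := Fintype.ofFinite _
            D := Dg q u
            θ := Multiplicative.toAdd (AddAut.mulLeft (XXg hP))
            spec := ?_ }⟩
  have hθ : ∀ (k : ℤ) (d : Bg q u), (k • Multiplicative.toAdd (AddAut.mulLeft (XXg hP))) d =
      ((XXg hP ^ k : (Bg q u)ˣ) : Bg q u) * d := by
    intro k d
    rw [← toAdd_zpow, ← map_zpow (AddAut.mulLeft (R := Bg q u)) (XXg hP) k]
    rfl
  ext n
  simp only [Set.mem_setOf_eq, Finset.coe_sort_coe, Finset.mem_coe]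
  constructor
  · rintro ⟨d, hdD, hd0, rfl⟩
    have hsne : (Finset.univ.filter (fun i => d i ≠ 0)).Nonempty := by
      by_contra h
      apply hd0
      funext i
      by_contra hdi
      exact h ⟨i, Finset.mem_filter.mpr ⟨Finset.mem_univ i, hdi⟩⟩
    set μ := (Finset.univ.filter (fun i => d i ≠ 0)).max' hsne with hμ
    have hdμ : d μ ≠ 0 := by
      have := (Finset.univ.filter (fun i => d i ≠ 0)).max'_mem hsne
      exact (Finset.mem_filter.mp this).2
    have hmax : ∀ j, d j ≠ 0 → j ≤ μ := fun j hj =>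
      Finset.le_max' _ j (Finset.mem_filter.mpr ⟨Finset.mem_univ j, hj⟩)
    have hcard := core hP hu hdD μ hdμ hmax
    have heq : (Set.range fun k : ℤ => (k • Multiplicative.toAdd (AddAut.mulLeft (XXg hP))) d) =
        (Set.range fun k : ℤ => ((XXg hP ^ k : (Bg q u)ˣ) : Bg q u) * d) := by
      ext z; constructor <;> rintro ⟨k, rfl⟩
      · exact ⟨k, (hθ k d).symm⟩
      · exact ⟨k, hθ k d⟩
    rw [heq, hcard]
    exact μ.2
  · intro hn
    set i : Idx P := ⟨n, hn⟩ with hi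
    set d : Bg q u := Pi.single i 1 with hd
    have hdD : d ∈ Dg q u := by
      rw [mem_Dg]
      intro j
      by_cases hj : j = i
      · subst hj
        rw [hd, Pi.single_eq_same]
        exact ⟨1, map_one _⟩
      · rw [hd, Pi.single_eq_of_ne hj]
        exact ⟨0, map_zero _⟩
    have hdi : d i ≠ 0 := by
      rw [hd, Pi.single_eq_same]
      exact one_ne_zero
    have hd0 : d ≠ 0 := by
      intro h
      exact hdi (by rw [h]; rfl)
    have hmax : ∀ j, d j ≠ 0 → j ≤ i := by
      intro j hj
      by_contra hji
      apply hj
      rw [hd, Pi.single_eq_of_ne]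
      intro h
      exact hji (le_of_eq h)
    have hcard := core hP hu hdD i hdi hmax
    refine ⟨d, hdD, hd0, ?_⟩
    have heq : (Set.range fun k : ℤ => (k • Multiplicative.toAdd (AddAut.mulLeft (XXg hP))) d) =
        (Set.range fun k : ℤ => ((XXg hP ^ k : (Bg q u)ˣ) : Bg q u) * d) := by
      ext z; constructor <;> rintro ⟨k, rfl⟩
      · exact ⟨k, (hθ k d).symm⟩
      · exact ⟨k, hθ k d⟩
    rw [heq, hcard]

end AlgLemmaProof

/-- For every finite set `P` of positive integers there exist a finite
abelian group `B`, a subgroup `D ≤ B` and an automorphism `θ` of `B`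
realizing `P` as the set of orbit-intersection cardinalities. -/
theorem exists_algLemmaWitness (P : Finset ℕ) (hP : ∀ n ∈ P, 0 < n) :
    Nonempty (AlgLemmaWitness P) :=
  AlgLemmaProof.exists_algLemmaWitness' P hP
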